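/- Let K, L be star bodies in ℝⁿ, 0 ≤ i < n, and φ : (0,∞) → (0,∞) convex and strictly decreasing. Define the Orlicz dual mixed quermassintegral W̃_{φ,i}(K,L) = (1/n)∫_{S^{n-1}} φ(ρ(L,u)/ρ(K,u)) ρ(K,u)^{n-i} dS(u) and the dual quermassintegral W̃ᵢ(K) = (1/n)∫_{S^{n-1}} ρ(K,u)^{n-i} dS(u). Then W̃_{φ,i}(K,L) ≥ W̃ᵢ(K) · φ( (W̃ᵢ(L)/W̃ᵢ(K))^{1/(n-i)} ). If φ is strictly convex, equality holds if and only if K and L are dilates. -/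

import Mathlib

open MeasureTheory Metric Real Set
open scoped NNReal ENNReal

/-- The surface (spherical) measure on the unit sphere `S^{n-1} ⊆ ℝⁿ`. -/
noncomputable def sphereσ (n : ℕ) : Measure (sphere (0 : EuclideanSpace ℝ (Fin n)) 1) :=
  μH[(n : ℝ) - 1]

namespace OrliczAux

variable {m : ℕ}

lemma abs_coord_le (n : ℕ) (x : EuclideanSpace ℝ (Fin n)) (i : Fin n) : |x i| ≤ ‖x‖ := by
  rw [EuclideanSpace.norm_eq, ← Real.sqrt_sq_eq_abs (x i)]
  refine Real.sqrt_le_sqrt ?_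
  simpa [Real.norm_eq_abs, sq_abs] using Finset.single_le_sum (f := fun j => x j ^ 2)
    (fun j _ => sq_nonneg (x j)) (Finset.mem_univ i)

lemma dist_coord_le (n : ℕ) (x y : EuclideanSpace ℝ (Fin n)) (i : Fin n) :
    dist (x i) (y i) ≤ dist x y := by
  rw [Real.dist_eq, dist_eq_norm]
  simpa using abs_coord_le n (x - y) i

/-- Projection dropping coordinate 0; 1-Lipschitz to the sup-metric pi space. -/
def proj (m : ℕ) (x : EuclideanSpace ℝ (Fin (m + 1))) : Fin m → ℝ := fun k => x k.succ

lemma lipschitz_proj (m : ℕ) : LipschitzWith 1 (proj m) := by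
  refine LipschitzWith.mk_one fun x y => ?_
  refine (dist_pi_le_iff dist_nonneg).2 fun k => ?_
  exact dist_coord_le _ x y k.succ

/-- Graph map onto the upper cap. -/
noncomputable def graphMap (m : ℕ) (y : Fin m → ℝ) : EuclideanSpace ℝ (Fin (m + 1)) :=
  WithLp.toLp 2 (fun k : Fin (m + 1) => (Fin.cases (motive := fun _ => ℝ) (Real.sqrt (1 - ∑ j, y j ^ 2)) y k : ℝ))

lemma graphMap_zero (y : Fin m → ℝ) : graphMap m y 0 = Real.sqrt (1 - ∑ j, y j ^ 2) := rfl

lemma graphMap_succ (y : Fin m → ℝ) (k : Fin m) : graphMap m y k.succ = y k := by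
  simp [graphMap]

end OrliczAux

namespace OrliczAux

lemma half_le_sqrt {a : ℝ} (ha : 1/4 ≤ a) : 1/2 ≤ Real.sqrt a := by
  have h := Real.sq_sqrt (by linarith : (0:ℝ) ≤ a)
  nlinarith [Real.sqrt_nonneg a]

lemma abs_sqrt_sub_sqrt {a b : ℝ} (ha : 1/4 ≤ a) (hb : 1/4 ≤ b) :
    |Real.sqrt a - Real.sqrt b| ≤ |a - b| := by
  have key : ∀ x y : ℝ, 1/4 ≤ x → 1/4 ≤ y → x ≤ y →
      Real.sqrt y - Real.sqrt x ≤ y - x := by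
    intro x y hx hy hxy
    have h1 := Real.sq_sqrt (by linarith : (0:ℝ) ≤ x)
    have h2 := Real.sq_sqrt (by linarith : (0:ℝ) ≤ y)
    have h3 := half_le_sqrt hx
    have h4 := half_le_sqrt hy
    have h5 : Real.sqrt x ≤ Real.sqrt y := Real.sqrt_le_sqrt hxy
    nlinarith [mul_nonneg (sub_nonneg.2 h5) (by linarith : (0:ℝ) ≤ Real.sqrt x + Real.sqrt y - 1)]
  rcases le_total a b with h | h
  · rw [abs_of_nonpos (by linarith [key a b ha hb h, Real.sqrt_le_sqrt h] : Real.sqrt a - Real.sqrt b ≤ 0),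
      abs_of_nonpos (by linarith : a - b ≤ 0)]
    linarith [key a b ha hb h]
  · rw [abs_of_nonneg (by linarith [Real.sqrt_le_sqrt h] : 0 ≤ Real.sqrt a - Real.sqrt b),
      abs_of_nonneg (by linarith : 0 ≤ a - b)]
    linarith [key b a hb ha h]

variable {m : ℕ}

def capDom (m : ℕ) : Set (Fin m → ℝ) := {y | ∑ j, y j ^ 2 ≤ 3/4}

lemma lipschitzOn_graphMap (m : ℕ) :
    LipschitzOnWith (2 * m + 1 : ℝ≥0) (graphMap m) (capDom m) := by
  refine LipschitzOnWith.of_dist_le_mul fun y hy y' hy' => ?_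
  have hd : (0:ℝ) ≤ dist y y' := dist_nonneg
  have hcoord : ∀ k : Fin m, dist (y k) (y' k) ≤ dist y y' := fun k => dist_le_pi_dist y y' k
  have hyb : ∀ k, |y k| ≤ 1 := by
    intro k
    have : y k ^ 2 ≤ 3/4 := le_trans (Finset.single_le_sum
      (f := fun j => y j ^ 2) (fun j _ => sq_nonneg _) (Finset.mem_univ k)) hy
    nlinarith [abs_nonneg (y k), sq_abs (y k)]
  have hyb' : ∀ k, |y' k| ≤ 1 := by
    intro k
    have : y' k ^ 2 ≤ 3/4 := le_trans (Finset.single_le_sum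
      (f := fun j => y' j ^ 2) (fun j _ => sq_nonneg _) (Finset.mem_univ k)) hy'
    nlinarith [abs_nonneg (y' k), sq_abs (y' k)]
  -- bound on the sums difference
  have hsum : |∑ j, y j ^ 2 - ∑ j, y' j ^ 2| ≤ 2 * m * dist y y' := by
    rw [← Finset.sum_sub_distrib]
    calc |∑ j, (y j ^ 2 - y' j ^ 2)| ≤ ∑ j, |y j ^ 2 - y' j ^ 2| :=
          Finset.abs_sum_le_sum_abs _ _
      _ ≤ ∑ _j : Fin m, 2 * dist y y' := by
          refine Finset.sum_le_sum fun j _ => ?_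
          have : y j ^ 2 - y' j ^ 2 = (y j - y' j) * (y j + y' j) := by ring
          rw [this, abs_mul]
          have h1 : |y j - y' j| ≤ dist y y' := by
            rw [← Real.dist_eq]; exact hcoord j
          have h2 : |y j + y' j| ≤ 2 := (abs_add_le _ _).trans (by linarith [hyb j, hyb' j])
          calc |y j - y' j| * |y j + y' j| ≤ dist y y' * 2 :=
                mul_le_mul h1 h2 (abs_nonneg _) hd
            _ = 2 * dist y y' := by ring
      _ = 2 * m * dist y y' := by
          rw [Finset.sum_const, Finset.card_univ, Fintype.card_fin]; push_cast; ring
  have h0 : dist (graphMap m y 0) (graphMap m y' 0) ≤ 2 * m * dist y y' := by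
    rw [graphMap_zero, graphMap_zero, Real.dist_eq]
    have ha : 1/4 ≤ 1 - ∑ j, y j ^ 2 := by
      have := hy; simp only [capDom, mem_setOf_eq] at this; linarith
    have hb : 1/4 ≤ 1 - ∑ j, y' j ^ 2 := by
      have := hy'; simp only [capDom, mem_setOf_eq] at this; linarith
    refine (abs_sqrt_sub_sqrt ha hb).trans ?_
    have : (1 - ∑ j, y j ^ 2) - (1 - ∑ j, y' j ^ 2) = -(∑ j, y j ^ 2 - ∑ j, y' j ^ 2) := by ring
    rw [this, abs_neg]; exact hsum
  rw [EuclideanSpace.dist_eq]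
  have hgoal : ∑ i, dist (graphMap m y i) (graphMap m y' i) ^ 2 ≤
      ((2 * m + 1) * dist y y') ^ 2 := by
    rw [Fin.sum_univ_succ]
    have hrest : ∑ j : Fin m, dist (graphMap m y j.succ) (graphMap m y' j.succ) ^ 2 ≤
        m * dist y y' ^ 2 := by
      calc ∑ j : Fin m, dist (graphMap m y j.succ) (graphMap m y' j.succ) ^ 2
          ≤ ∑ _j : Fin m, dist y y' ^ 2 := by
            refine Finset.sum_le_sum fun j _ => ?_
            rw [graphMap_succ, graphMap_succ]
            exact pow_le_pow_left₀ dist_nonneg (hcoord j) 2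
        _ = m * dist y y' ^ 2 := by
            rw [Finset.sum_const, Finset.card_univ, Fintype.card_fin]; push_cast; ring
    have h0' : dist (graphMap m y 0) (graphMap m y' 0) ^ 2 ≤ (2 * m * dist y y') ^ 2 :=
      pow_le_pow_left₀ dist_nonneg h0 2
    have hm : (0:ℝ) ≤ m := Nat.cast_nonneg m
    nlinarith [sq_nonneg (dist y y')]
  calc Real.sqrt (∑ i, dist (graphMap m y i) (graphMap m y' i) ^ 2)
      ≤ Real.sqrt (((2 * m + 1) * dist y y') ^ 2) := Real.sqrt_le_sqrt hgoal
    _ = (2 * m + 1) * dist y y' := by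
        rw [Real.sqrt_sq (by positivity)]
    _ = (2 * (m:ℝ≥0) + 1 : ℝ≥0) * dist y y' := by push_cast; ring

end OrliczAux

namespace OrliczAux

lemma sum_sq_eq_one {m : ℕ} {x : EuclideanSpace ℝ (Fin m)} (hx : ‖x‖ = 1) :
    ∑ i, x i ^ 2 = 1 := by
  have h := EuclideanSpace.norm_eq x
  rw [hx] at h
  have h2 : Real.sqrt (∑ i, ‖x i‖ ^ 2) ^ 2 = 1 := by rw [← h]; norm_num
  rw [Real.sq_sqrt (by positivity)] at h2
  simpa [Real.norm_eq_abs, sq_abs] using h2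

noncomputable def ctr (m : ℕ) : EuclideanSpace ℝ (Fin (m+1)) := EuclideanSpace.single 0 1

lemma ctr_zero (m : ℕ) : ctr m 0 = 1 := by simp [ctr, EuclideanSpace.single_apply]

lemma ctr_succ (m : ℕ) (k : Fin m) : ctr m k.succ = 0 := by
  simp [ctr, EuclideanSpace.single_apply, Fin.succ_ne_zero]

lemma ctr_mem (m : ℕ) : ctr m ∈ sphere (0 : EuclideanSpace ℝ (Fin (m+1))) 1 := by
  rw [mem_sphere_zero_iff_norm]
  simp [ctr, EuclideanSpace.norm_single]

noncomputable def ctrS (m : ℕ) : ↥(sphere (0 : EuclideanSpace ℝ (Fin (m+1))) 1) := ⟨ctr m, ctr_mem m⟩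

lemma image_ball_subtype {m : ℕ} (v : ↥(sphere (0 : EuclideanSpace ℝ (Fin m)) 1)) (r : ℝ) :
    Subtype.val '' (Metric.ball v r) =
      Metric.ball (v : EuclideanSpace ℝ (Fin m)) r ∩ sphere (0 : EuclideanSpace ℝ (Fin m)) 1 := by
  ext x
  constructor
  · rintro ⟨⟨x, hx⟩, hb, rfl⟩
    exact ⟨by rwa [mem_ball, Subtype.dist_eq] at hb, hx⟩
  · rintro ⟨hb, hx⟩
    exact ⟨⟨x, hx⟩, by rwa [mem_ball, Subtype.dist_eq], rfl⟩

lemma cap_subset_graph (m : ℕ) :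
    Subtype.val '' (Metric.ball (ctrS m) (1/2)) ⊆ graphMap m '' capDom m := by
  rw [image_ball_subtype]
  rintro x ⟨hb, hx⟩
  rw [mem_ball, dist_eq_norm] at hb
  rw [mem_sphere_zero_iff_norm] at hx
  have hx0 : |x 0 - 1| < 1/2 := by
    have h1 := abs_coord_le (m+1) (x - ctr m) 0
    have h2 : (x - ctr m) 0 = x 0 - 1 := by
      simp [ctr_zero, EuclideanSpace.single_apply, ctr]
    rw [h2] at h1
    exact lt_of_le_of_lt h1 hb
  have hx0' : 1/2 < x 0 := by
    rcases abs_lt.1 hx0 with ⟨h1, h2⟩; linarith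
  have hsum := sum_sq_eq_one hx
  rw [Fin.sum_univ_succ] at hsum
  refine ⟨proj m x, ?_, ?_⟩
  · have : ∑ j : Fin m, proj m x j ^ 2 = 1 - x 0 ^ 2 := by
      simp only [proj]; linarith
    simp only [capDom, mem_setOf_eq, this]
    nlinarith
  · refine PiLp.ext fun k => ?_
    induction k using Fin.cases with
    | zero =>
      rw [graphMap_zero]
      have : (1 : ℝ) - ∑ j, proj m x j ^ 2 = x 0 ^ 2 := by
        simp only [proj]; linarith
      rw [this, Real.sqrt_sq (by linarith)]
    | succ j => rw [graphMap_succ]; rfl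

end OrliczAux

namespace OrliczAux

lemma hpi (m : ℕ) : (μH[(m:ℝ)] : Measure (Fin m → ℝ)) = volume := by
  simpa using hausdorffMeasure_pi_real (ι := Fin m)

lemma cap_meas_lt_top (m : ℕ) :
    μH[(m:ℝ)] (Metric.ball (ctrS m) (1/2)) < ∞ := by
  have hd : (0:ℝ) ≤ m := Nat.cast_nonneg m
  rw [← Isometry.hausdorffMeasure_image isometry_subtype_coe (Or.inl hd)]
  calc μH[(m:ℝ)] (Subtype.val '' Metric.ball (ctrS m) (1/2))
      ≤ μH[(m:ℝ)] (graphMap m '' capDom m) := measure_mono (cap_subset_graph m)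
    _ ≤ (2 * m + 1 : ℝ≥0) ^ (m:ℝ) * μH[(m:ℝ)] (capDom m) :=
        (lipschitzOn_graphMap m).hausdorffMeasure_image_le hd
    _ < ∞ := by
        rw [hpi m]
        have hsub : capDom m ⊆ Metric.closedBall (0 : Fin m → ℝ) 1 := by
          intro y hy
          rw [Metric.mem_closedBall]
          refine (dist_pi_le_iff zero_le_one).2 fun k => ?_
          have : y k ^ 2 ≤ 3/4 := le_trans (Finset.single_le_sum
            (f := fun j => y j ^ 2) (fun j _ => sq_nonneg _) (Finset.mem_univ k)) hy
          simp only [Pi.zero_apply, Real.dist_eq, sub_zero]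
          have h2 : |y k| ^ 2 ≤ 3/4 := by rwa [sq_abs]
          nlinarith [abs_nonneg (y k)]
        have hfin : volume (capDom m) < ∞ :=
          lt_of_le_of_lt (measure_mono hsub)
            (by rw [Real.volume_pi_closedBall _ zero_le_one]; exact ENNReal.ofReal_lt_top)
        exact ENNReal.mul_lt_top
          (ENNReal.rpow_lt_top_of_nonneg hd ENNReal.coe_ne_top) hfin

end OrliczAux

namespace OrliczAux

lemma cap_meas_pos (m : ℕ) {r : ℝ} (hr : 0 < r) :
    0 < μH[(m:ℝ)] (Metric.ball (ctrS m) r) := by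
  have hd : (0:ℝ) ≤ m := Nat.cast_nonneg m
  rw [← Isometry.hausdorffMeasure_image isometry_subtype_coe (Or.inl hd)]
  set c : ℝ := min r 1 / (2 * (m + 1)) with hc
  have hm1 : (0:ℝ) < m + 1 := by positivity
  have hrm : 0 < min r 1 := lt_min hr one_pos
  have hcpos : 0 < c := by positivity
  have key : Metric.ball (0 : Fin m → ℝ) c ⊆
      proj m '' (Subtype.val '' Metric.ball (ctrS m) r) := by
    intro y hy
    rw [Metric.mem_ball] at hy
    have hyk : ∀ k, |y k| < c := by
      intro k
      have h1 : dist (y k) ((0 : Fin m → ℝ) k) ≤ dist y 0 := dist_le_pi_dist y 0 k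
      simp only [Pi.zero_apply, Real.dist_eq, sub_zero] at h1
      exact lt_of_le_of_lt h1 hy
    set s : ℝ := ∑ j, y j ^ 2 with hs
    have hs0 : 0 ≤ s := Finset.sum_nonneg fun j _ => sq_nonneg _
    have hsle : s ≤ m * c ^ 2 := by
      calc s ≤ ∑ _j : Fin m, c ^ 2 := Finset.sum_le_sum fun j _ => by
              have := (hyk j).le
              nlinarith [abs_nonneg (y j), sq_abs (y j)]
        _ = m * c ^ 2 := by rw [Finset.sum_const, Finset.card_univ, Fintype.card_fin,
              nsmul_eq_mul]
    have hmc : (m:ℝ) * c ^ 2 ≤ min r 1 ^ 2 / 4 := by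
      rw [hc, div_pow, ← mul_div_assoc,
        div_le_div_iff₀ (by positivity) (by norm_num : (0:ℝ) < 4)]
      nlinarith [mul_nonneg (sq_nonneg (min r 1))
        (by nlinarith : (0:ℝ) ≤ ((m:ℝ)+1)^2 - m)]
    have hs14 : s ≤ 1/4 := by
      have : min r 1 ≤ 1 := min_le_right _ _
      nlinarith
    have hs2r : 2 * s < r ^ 2 := by
      have : min r 1 ≤ r := min_le_left _ _
      nlinarith
    set x := graphMap m y with hxdef
    have hx0 : x 0 = Real.sqrt (1 - s) := graphMap_zero y
    have hxsucc : ∀ k, x k.succ = y k := graphMap_succ y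
    have hsq : Real.sqrt (1 - s) ^ 2 = 1 - s := Real.sq_sqrt (by linarith)
    have hsqrt_ge : 1 - s ≤ Real.sqrt (1 - s) := by
      have h1 : ((1:ℝ) - s) ^ 2 ≤ 1 - s := by nlinarith
      calc (1:ℝ) - s = Real.sqrt ((1 - s)^2) := (Real.sqrt_sq (by linarith)).symm
        _ ≤ Real.sqrt (1 - s) := Real.sqrt_le_sqrt h1
    have hxsum : ∑ i, x i ^ 2 = 1 := by
      rw [Fin.sum_univ_succ, hx0, hsq]
      simp only [hxsucc]
      linarith
    have hxnorm : ‖x‖ = 1 := by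
      rw [EuclideanSpace.norm_eq]
      simp only [Real.norm_eq_abs, sq_abs]
      rw [hxsum, Real.sqrt_one]
    have hxmem : x ∈ sphere (0 : EuclideanSpace ℝ (Fin (m+1))) 1 :=
      mem_sphere_zero_iff_norm.2 hxnorm
    have hdist : dist x (ctr m) < r := by
      rw [EuclideanSpace.dist_eq]
      have hterm : ∑ i, dist (x i) (ctr m i) ^ 2 = (Real.sqrt (1 - s) - 1) ^ 2 + s := by
        rw [Fin.sum_univ_succ, hx0, ctr_zero]
        simp only [hxsucc, ctr_succ, Real.dist_eq, sub_zero, sq_abs]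
        rw [hs]
      rw [hterm]
      have hb : (Real.sqrt (1 - s) - 1) ^ 2 + s < r ^ 2 := by
        have h1 : 0 ≤ Real.sqrt (1 - s) := Real.sqrt_nonneg _
        have h2 : Real.sqrt (1 - s) ≤ 1 := Real.sqrt_le_one.2 (by linarith)
        nlinarith
      calc Real.sqrt ((Real.sqrt (1 - s) - 1) ^ 2 + s) < Real.sqrt (r ^ 2) :=
            Real.sqrt_lt_sqrt (by positivity) hb
        _ = r := Real.sqrt_sq hr.le
    refine ⟨x, ⟨⟨x, hxmem⟩, ?_, rfl⟩, ?_⟩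
    · rw [Metric.mem_ball, Subtype.dist_eq]
      exact hdist
    · funext k
      exact hxsucc k
  calc (0:ℝ≥0∞) < volume (Metric.ball (0 : Fin m → ℝ) c) := by
        rw [Real.volume_pi_ball _ hcpos]
        exact ENNReal.ofReal_pos.2 (by positivity)
    _ = μH[(m:ℝ)] (Metric.ball (0 : Fin m → ℝ) c) := by rw [hpi m]
    _ ≤ μH[(m:ℝ)] (proj m '' (Subtype.val '' Metric.ball (ctrS m) r)) :=
        measure_mono key
    _ ≤ (1:ℝ≥0) ^ (m:ℝ) * μH[(m:ℝ)] (Subtype.val '' Metric.ball (ctrS m) r) :=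
        (lipschitz_proj m).hausdorffMeasure_image_le hd _
    _ = μH[(m:ℝ)] (Subtype.val '' Metric.ball (ctrS m) r) := by simp

end OrliczAux

namespace OrliczAux

lemma ball_meas_eq (m : ℕ) (v : ↥(sphere (0 : EuclideanSpace ℝ (Fin (m+1))) 1)) (r : ℝ) :
    μH[(m:ℝ)] (Metric.ball v r) = μH[(m:ℝ)] (Metric.ball (ctrS m) r) := by
  have hd : (0:ℝ) ≤ m := Nat.cast_nonneg m
  have hnorm : ‖(ctrS m : EuclideanSpace ℝ (Fin (m+1)))‖ = ‖(v : EuclideanSpace ℝ (Fin (m+1)))‖ := by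
    rw [mem_sphere_zero_iff_norm.1 (ctrS m).2, mem_sphere_zero_iff_norm.1 v.2]
  obtain ⟨R, hR⟩ : ∃ R : EuclideanSpace ℝ (Fin (m+1)) ≃ₗᵢ[ℝ] EuclideanSpace ℝ (Fin (m+1)),
      R (ctrS m : EuclideanSpace ℝ (Fin (m+1))) = (v : EuclideanSpace ℝ (Fin (m+1))) := by
    by_cases h : (ctrS m : EuclideanSpace ℝ (Fin (m+1))) = (v : EuclideanSpace ℝ (Fin (m+1)))
    · exact ⟨LinearIsometryEquiv.refl ℝ _, h⟩
    · exact ⟨Submodule.reflection (ℝ ∙ ((ctrS m : EuclideanSpace ℝ (Fin (m+1))) - (v : EuclideanSpace ℝ (Fin (m+1)))))ᗮ, Submodule.reflection_sub hnorm⟩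
  have e1 := Isometry.hausdorffMeasure_image
    (isometry_subtype_coe : Isometry (Subtype.val :
      ↥(sphere (0 : EuclideanSpace ℝ (Fin (m+1))) 1) → EuclideanSpace ℝ (Fin (m+1))))
    (Or.inl hd) (Metric.ball v r)
  have e2 := Isometry.hausdorffMeasure_image
    (isometry_subtype_coe : Isometry (Subtype.val :
      ↥(sphere (0 : EuclideanSpace ℝ (Fin (m+1))) 1) → EuclideanSpace ℝ (Fin (m+1))))
    (Or.inl hd) (Metric.ball (ctrS m) r)
  rw [← e1, ← e2, image_ball_subtype, image_ball_subtype]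
  have himg : R '' (Metric.ball (ctrS m : EuclideanSpace ℝ (Fin (m+1))) r ∩
        sphere (0 : EuclideanSpace ℝ (Fin (m+1))) 1) =
      Metric.ball (v : EuclideanSpace ℝ (Fin (m+1))) r ∩
        sphere (0 : EuclideanSpace ℝ (Fin (m+1))) 1 := by
    rw [image_inter R.injective, R.image_ball, hR, R.image_sphere, map_zero]
  rw [← himg]
  exact (R.isometry.hausdorffMeasure_image (Or.inl hd) _)

lemma sphere_meas_finite (m : ℕ) :
    μH[(m:ℝ)] (univ : Set ↥(sphere (0 : EuclideanSpace ℝ (Fin (m+1))) 1)) < ∞ := by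
  obtain ⟨t, ht⟩ := isCompact_univ.elim_finite_subcover
    (fun v : ↥(sphere (0 : EuclideanSpace ℝ (Fin (m+1))) 1) => Metric.ball v (1/2))
    (fun v => Metric.isOpen_ball)
    (fun x _ => mem_iUnion.2 ⟨x, Metric.mem_ball_self (by norm_num)⟩)
  calc μH[(m:ℝ)] (univ : Set ↥(sphere (0 : EuclideanSpace ℝ (Fin (m+1))) 1))
      ≤ μH[(m:ℝ)] (⋃ v ∈ t, Metric.ball v (1/2)) := measure_mono ht
    _ ≤ ∑ v ∈ t, μH[(m:ℝ)] (Metric.ball v (1/2)) := measure_biUnion_finset_le t _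
    _ = ∑ _v ∈ t, μH[(m:ℝ)] (Metric.ball (ctrS m) (1/2)) :=
        Finset.sum_congr rfl fun v _ => ball_meas_eq m v _
    _ = t.card • μH[(m:ℝ)] (Metric.ball (ctrS m) (1/2)) := by rw [Finset.sum_const]
    _ < ∞ := by
        rw [nsmul_eq_mul]
        exact ENNReal.mul_lt_top (ENNReal.natCast_lt_top _) (cap_meas_lt_top m)

lemma sphere_meas_open_pos (m : ℕ) {U : Set ↥(sphere (0 : EuclideanSpace ℝ (Fin (m+1))) 1)}
    (hU : IsOpen U) (hne : U.Nonempty) : 0 < μH[(m:ℝ)] U := by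
  obtain ⟨x, hx⟩ := hne
  obtain ⟨r, hr, hball⟩ := Metric.isOpen_iff.1 hU x hx
  calc (0:ℝ≥0∞) < μH[(m:ℝ)] (Metric.ball (ctrS m) r) := cap_meas_pos m hr
    _ = μH[(m:ℝ)] (Metric.ball x r) := (ball_meas_eq m x r).symm
    _ ≤ μH[(m:ℝ)] U := measure_mono hball

end OrliczAux

namespace OrliczAux

lemma integrable_of_continuous {X : Type*} [MeasurableSpace X] [TopologicalSpace X]
    [OpensMeasurableSpace X] [CompactSpace X] [Nonempty X]
    (κ : Measure X) [IsFiniteMeasure κ] (h : X → ℝ) (hc : Continuous h) :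
    Integrable h κ := by
  obtain ⟨x0, -, hx0⟩ := isCompact_univ.exists_isMaxOn univ_nonempty
    (hc.norm.continuousOn)
  rw [isMaxOn_iff] at hx0
  exact (integrable_const ‖h x0‖).mono' hc.aestronglyMeasurable
    (Filter.Eventually.of_forall fun x => hx0 x (mem_univ x))

end OrliczAux


/-- The Orlicz dual Minkowski inequality for dual quermassintegrals:
`W̃_{φ,i}(K,L) ≥ W̃ᵢ(K)·φ((W̃ᵢ(L)/W̃ᵢ(K))^{1/(n-i)})`; if `φ` is strictly convex,
equality holds iff `K` and `L` are dilates. -/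
theorem orlicz_dual_mixed_quermassintegral_minkowski
    (n i : ℕ) (hi : i < n)
    (φ : ℝ → ℝ)
    (hφconv : ConvexOn ℝ (Ioi 0) φ)
    (hφanti : StrictAntiOn φ (Ioi 0))
    (hφpos : ∀ t ∈ Ioi (0 : ℝ), 0 < φ t)
    (ρK ρL : sphere (0 : EuclideanSpace ℝ (Fin n)) 1 → ℝ)
    (hKc : Continuous ρK) (hLc : Continuous ρL)
    (hKpos : ∀ u, 0 < ρK u) (hLpos : ∀ u, 0 < ρL u)
    (Wφ WK WL : ℝ)
    (hWφ : Wφ = (1 / n) * ∫ u, φ (ρL u / ρK u) * (ρK u) ^ (n - i) ∂(sphereσ n))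
    (hWK : WK = (1 / n) * ∫ u, (ρK u) ^ (n - i) ∂(sphereσ n))
    (hWL : WL = (1 / n) * ∫ u, (ρL u) ^ (n - i) ∂(sphereσ n)) :
    Wφ ≥ WK * φ ((WL / WK) ^ (((n : ℝ) - i)⁻¹)) ∧
      (StrictConvexOn ℝ (Ioi 0) φ →
        (Wφ = WK * φ ((WL / WK) ^ (((n : ℝ) - i)⁻¹)) ↔
          ∃ c : ℝ, 0 < c ∧ ∀ u, ρK u = c * ρL u)) := by
  obtain ⟨m, rfl⟩ : ∃ m, n = m + 1 := ⟨n - 1, by omega⟩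
  haveI : Nonempty ↥(sphere (0 : EuclideanSpace ℝ (Fin (m+1))) 1) := ⟨OrliczAux.ctrS m⟩
  have hμeq : sphereσ (m+1) = (μH[(m:ℝ)] :
      Measure ↥(sphere (0 : EuclideanSpace ℝ (Fin (m+1))) 1)) := by
    unfold sphereσ; norm_num
  set μ := sphereσ (m+1) with hμdef
  haveI hfinμ : IsFiniteMeasure μ := ⟨by rw [hμeq]; exact OrliczAux.sphere_meas_finite m⟩
  have hopen : ∀ U : Set ↥(sphere (0 : EuclideanSpace ℝ (Fin (m+1))) 1),
      IsOpen U → U.Nonempty → μ U ≠ 0 := fun U h1 h2 => by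
    rw [hμeq]; exact (OrliczAux.sphere_meas_open_pos m h1 h2).ne'
  have hμuniv : μ univ ≠ 0 := hopen univ isOpen_univ univ_nonempty
  -- basic setup
  set p := m + 1 - i with hpdef
  have hppos : 0 < p := by omega
  have hpne : (p : ℝ) ≠ 0 := by positivity
  have hcast : ((m + 1 : ℕ) : ℝ) - (i : ℝ) = ((p : ℕ) : ℝ) := by
    rw [hpdef, Nat.cast_sub (by omega : i ≤ m + 1)]
  rw [hcast]
  have hn1 : ((m : ℝ) + 1) ≠ 0 := by positivity
  set g : ↥(sphere (0 : EuclideanSpace ℝ (Fin (m+1))) 1) → ℝ := fun u => ρL u / ρK u with hgdef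
  have hgc : Continuous g := hLc.div hKc fun u => (hKpos u).ne'
  have hgpos : ∀ u, 0 < g u := fun u => div_pos (hLpos u) (hKpos u)
  have hfKc : Continuous fun u => ρK u ^ p := hKc.pow p
  have hfLc : Continuous fun u => ρL u ^ p := hLc.pow p
  -- extremes of g
  obtain ⟨umin, -, hmin⟩ := isCompact_univ.exists_isMinOn univ_nonempty hgc.continuousOn
  obtain ⟨umax, -, hmax⟩ := isCompact_univ.exists_isMaxOn univ_nonempty hgc.continuousOn
  rw [isMinOn_iff] at hmin
  rw [isMaxOn_iff] at hmax
  set a := g umin with hadef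
  set b := g umax with hbdef
  have hapos : 0 < a := hgpos umin
  have hab : ∀ u, g u ∈ Icc a b := fun u => ⟨hmin u (mem_univ u), hmax u (mem_univ u)⟩
  -- minimum of ρK ^ p
  obtain ⟨kmin, -, hkmin⟩ := isCompact_univ.exists_isMinOn univ_nonempty hfKc.continuousOn
  rw [isMinOn_iff] at hkmin
  obtain ⟨lmin, -, hlmin⟩ := isCompact_univ.exists_isMinOn univ_nonempty hfLc.continuousOn
  rw [isMinOn_iff] at hlmin
  have hintμ : ∀ h : ↥(sphere (0 : EuclideanSpace ℝ (Fin (m+1))) 1) → ℝ,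
      Continuous h → Integrable h μ := fun h hc => OrliczAux.integrable_of_continuous μ h hc
  have hμtoReal : 0 < (μ univ).toReal :=
    ENNReal.toReal_pos hμuniv (measure_ne_top μ _)
  -- positivity of the two basic integrals
  have intpos : ∀ h : ↥(sphere (0 : EuclideanSpace ℝ (Fin (m+1))) 1) → ℝ,
      Continuous h → (∀ u, 0 < h u) → 0 < ∫ u, h u ∂μ := by
    intro h hc hpos
    obtain ⟨v, -, hv⟩ := isCompact_univ.exists_isMinOn univ_nonempty hc.continuousOn
    rw [isMinOn_iff] at hv
    have h1 : ∫ u, (fun _ => h v) u ∂μ ≤ ∫ u, h u ∂μ :=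
      integral_mono (integrable_const _) (hintμ h hc) fun u => hv u (mem_univ u)
    rw [integral_const, smul_eq_mul, measureReal_def] at h1
    nlinarith [hpos v, hμtoReal]
  set T := ∫ u, ρK u ^ p ∂μ with hTdef
  have hTpos : 0 < T := intpos _ hfKc fun u => pow_pos (hKpos u) p
  have hWKpos : 0 < WK := by
    rw [hWK]; push_cast
    exact mul_pos (by positivity) hTpos
  have hWLpos : 0 < WL := by
    rw [hWL]; push_cast
    exact mul_pos (by positivity) (intpos _ hfLc fun u => pow_pos (hLpos u) p)
  -- the weighted measure
  set w : ↥(sphere (0 : EuclideanSpace ℝ (Fin (m+1))) 1) → ℝ≥0 :=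
    fun u => Real.toNNReal (ρK u ^ p) with hwdef
  have hwm : Measurable w := measurable_real_toNNReal.comp (hKc.pow p).measurable
  set ν := μ.withDensity (fun u => (w u : ℝ≥0∞)) with hνdef
  have hνuniv : ν univ = ENNReal.ofReal T := by
    rw [hνdef, withDensity_apply _ MeasurableSet.univ, setLIntegral_univ]
    exact (ofReal_integral_eq_lintegral_ofReal (hintμ _ hfKc)
      (Filter.Eventually.of_forall fun u => (pow_pos (hKpos u) p).le)).symm
  haveI hνfin : IsFiniteMeasure ν := ⟨by rw [hνuniv]; exact ENNReal.ofReal_lt_top⟩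
  have hν0 : ν univ ≠ 0 := by
    rw [hνuniv]; exact (ENNReal.ofReal_pos.2 hTpos).ne'
  haveI : NeZero ν := ⟨Measure.measure_univ_ne_zero.mp hν0⟩
  have hνtoReal : (ν univ).toReal = T := by rw [hνuniv, ENNReal.toReal_ofReal hTpos.le]
  have hintν : ∀ h : ↥(sphere (0 : EuclideanSpace ℝ (Fin (m+1))) 1) → ℝ,
      Continuous h → Integrable h ν := fun h hc => OrliczAux.integrable_of_continuous ν h hc
  have hIν : ∀ h : ↥(sphere (0 : EuclideanSpace ℝ (Fin (m+1))) 1) → ℝ,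
      ∫ u, h u ∂ν = ∫ u, h u * ρK u ^ p ∂μ := by
    intro h
    rw [hνdef, integral_withDensity_eq_integral_smul hwm h]
    congr 1
    funext u
    rw [NNReal.smul_def, hwdef, Real.coe_toNNReal _ (pow_pos (hKpos u) p).le, smul_eq_mul,
      mul_comm]
  -- continuity of φ on [a, b]
  have hφcont : ContinuousOn φ (Icc a b) :=
    (hφconv.continuousOn isOpen_Ioi).mono fun x hx => lt_of_lt_of_le hapos hx.1
  have hIccsub : Icc a b ⊆ Ioi 0 := fun x hx => lt_of_lt_of_le hapos hx.1
  have hφconv' : ConvexOn ℝ (Icc a b) φ := hφconv.subset hIccsub (convex_Icc a b)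
  have hfs : ∀ᵐ u ∂ν, g u ∈ Icc a b := Filter.Eventually.of_forall hab
  -- the three averages
  set A := ⨍ u, g u ∂ν with hAdef
  set B := ⨍ u, φ (g u) ∂ν with hBdef
  have hφgc : Continuous fun u => φ (g u) :=
    hφcont.comp_continuous hgc hab
  -- Jensen 1
  have hJ1 : φ A ≤ B :=
    hφconv'.map_average_le hφcont isClosed_Icc hfs (hintν g hgc) (hintν _ hφgc)
  -- Jensen 2
  have hJ2 : A ^ p ≤ ⨍ u, g u ^ p ∂ν := by
    have := (convexOn_pow p).map_average_le (continuous_pow p).continuousOn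
      isClosed_Ici (Filter.Eventually.of_forall fun u => (hgpos u).le)
      (hintν g hgc) (hintν _ (hgc.pow p))
    simpa using this
  -- value of the averages
  have havg : ∀ h : ↥(sphere (0 : EuclideanSpace ℝ (Fin (m+1))) 1) → ℝ,
      ⨍ u, h u ∂ν = T⁻¹ * ∫ u, h u * ρK u ^ p ∂μ := by
    intro h
    rw [average_eq, measureReal_def, hνtoReal, smul_eq_mul, hIν]
  have hm1ne : ((m + 1 : ℕ) : ℝ) ≠ 0 := by positivity
  have hB : B = Wφ / WK := by
    rw [hBdef, havg]
    have e1 : ∫ u, φ (g u) * ρK u ^ p ∂μ = ∫ u, φ (ρL u / ρK u) * ρK u ^ p ∂μ := rfl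
    rw [e1, hWφ, hWK]
    field_simp
    try ring
  have hP : (⨍ u, g u ^ p ∂ν) = WL / WK := by
    rw [havg]
    have e1 : ∫ u, g u ^ p * ρK u ^ p ∂μ = ∫ u, ρL u ^ p ∂μ := by
      congr 1
      funext u
      show (ρL u / ρK u) ^ p * ρK u ^ p = ρL u ^ p
      rw [div_pow, div_mul_cancel₀ _ (pow_ne_zero p (hKpos u).ne')]
    rw [e1, hWL, hWK]
    field_simp
    try ring
  -- positivity of the average A
  have hA' : A = T⁻¹ * ∫ u, g u ∂ν := by rw [hAdef, average_eq, measureReal_def, hνtoReal, smul_eq_mul]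
  have haA : a ≤ A := by
    have h1 : ∫ _u, a ∂ν ≤ ∫ u, g u ∂ν :=
      integral_mono (integrable_const a) (hintν g hgc) fun u => (hab u).1
    rw [integral_const, smul_eq_mul, measureReal_def, hνtoReal] at h1
    have h2 : T⁻¹ * (T * a) ≤ T⁻¹ * ∫ u, g u ∂ν :=
      mul_le_mul_of_nonneg_left h1 (inv_nonneg.2 hTpos.le)
    rw [← mul_assoc, inv_mul_cancel₀ hTpos.ne', one_mul] at h2
    rw [hA']; exact h2
  have hApos : 0 < A := lt_of_lt_of_le hapos haA
  have hQpos : 0 < (WL / WK) ^ ((p : ℝ))⁻¹ :=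
    Real.rpow_pos_of_pos (div_pos hWLpos hWKpos) _
  have hAQ : A ≤ (WL / WK) ^ ((p : ℝ))⁻¹ := by
    have h1 : A ^ p ≤ WL / WK := hP ▸ hJ2
    calc A = (A ^ p) ^ ((p : ℝ))⁻¹ := by
          rw [← Real.rpow_natCast A p, ← Real.rpow_mul hApos.le, mul_inv_cancel₀ hpne,
            Real.rpow_one]
      _ ≤ (WL / WK) ^ ((p : ℝ))⁻¹ :=
          Real.rpow_le_rpow (pow_nonneg hApos.le p) h1 (by positivity)
  have hφQA : φ ((WL / WK) ^ ((p : ℝ))⁻¹) ≤ φ A :=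
    hφanti.antitoneOn (mem_Ioi.2 hApos) (mem_Ioi.2 hQpos) hAQ
  have hWφeq : Wφ = WK * B := by rw [hB]; field_simp
  constructor
  · -- the inequality
    have h1 : WK * φ ((WL / WK) ^ ((p : ℝ))⁻¹) ≤ WK * B :=
      mul_le_mul_of_nonneg_left (le_trans hφQA hJ1) hWKpos.le
    rw [ge_iff_le, hWφeq]
    exact h1
  · intro hstrict
    constructor
    · -- equality implies dilates
      intro heq
      have hBA : φ A = B := by
        have h1 : WK * φ ((WL / WK) ^ ((p : ℝ))⁻¹) = WK * B := by rw [← hWφeq, heq]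
        have h2 : φ ((WL / WK) ^ ((p : ℝ))⁻¹) = B := mul_left_cancel₀ hWKpos.ne' h1
        linarith [hφQA, hJ1]
      rcases (hstrict.subset hIccsub (convex_Icc a b)).ae_eq_const_or_map_average_lt hφcont
        isClosed_Icc hfs (hintν g hgc) (hintν _ hφgc) with hconst | hlt
      · rw [← hAdef] at hconst
        have hμae : ∀ᵐ u ∂μ, g u = A := by
          have hwm' : Measurable fun u => ((w u : ℝ≥0∞)) := hwm.coe_nnreal_ennreal
          rw [hνdef] at hconst
          have h3 := (ae_withDensity_iff hwm').1 hconst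
          filter_upwards [h3] with u hu
          refine hu ?_
          simp only [hwdef, ne_eq, ENNReal.coe_eq_zero, Real.toNNReal_eq_zero, not_le]
          exact pow_pos (hKpos u) p
        have hall : ∀ u, g u = A := by
          by_contra hne
          push_neg at hne
          obtain ⟨u0, hu0⟩ := hne
          have hVeq : {u | g u ≠ A} = (g ⁻¹' {A})ᶜ := by ext u; simp
          have hVopen : IsOpen {u | g u ≠ A} := by
            rw [hVeq]
            exact (isClosed_singleton.preimage hgc).isOpen_compl
          have hV0 : μ {u | g u ≠ A} = 0 := by
            have h4 := hμae
            rw [Filter.eventually_iff, mem_ae_iff] at h4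
            have : {u | g u = A}ᶜ = {u | g u ≠ A} := by ext u; simp
            rwa [this] at h4
          exact hopen _ hVopen ⟨u0, hu0⟩ hV0
        refine ⟨A⁻¹, inv_pos.2 hApos, fun u => ?_⟩
        have h3 : ρL u / ρK u = A := hall u
        rw [div_eq_iff (hKpos u).ne'] at h3
        rw [h3]
        field_simp
      · exact absurd hBA hlt.ne
    · -- dilates implies equality
      rintro ⟨c, hc, hcK⟩
      have hgc' : ∀ u, ρL u / ρK u = c⁻¹ := by
        intro u
        rw [hcK u]
        rw [div_eq_iff (mul_pos hc (hLpos u)).ne']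
        field_simp
      have hWKeq : WK = c ^ p * WL := by
        rw [hWK, hWL, hTdef]
        have e1 : ∫ u, ρK u ^ p ∂μ = ∫ u, c ^ p * ρL u ^ p ∂μ := by
          congr 1; funext u; rw [hcK u, mul_pow]
        rw [e1, integral_const_mul]
        ring
      have hQc : (WL / WK) ^ ((p : ℝ))⁻¹ = c⁻¹ := by
        rw [hWKeq]
        have e1 : WL / (c ^ p * WL) = (c⁻¹) ^ p := by
          rw [inv_pow]; field_simp; try ring
        rw [e1, ← Real.rpow_natCast (c⁻¹) p, ← Real.rpow_mul (inv_nonneg.2 hc.le),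
          mul_inv_cancel₀ hpne, Real.rpow_one]
      rw [hQc, hWφ]
      have e2 : ∫ u, φ (ρL u / ρK u) * ρK u ^ p ∂μ = ∫ u, φ c⁻¹ * ρK u ^ p ∂μ := by
        congr 1; funext u; rw [hgc' u]
      rw [e2, integral_const_mul, ← hTdef, hWK]
      ring
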